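/- Let Λ be a row-finite, locally convex k-graph. Suppose p ∈ ℕ^k and (x_n)_{n ∈ ℕ^k} is a family of boundary paths of Λ such that p ∧ d(x_n) = 0 for every n ∈ ℕ^k, and such that (x_a;(p, p+a)) ≈ (x_b;(p, p+a)) whenever a ≤ b in ℕ^k. Then there exists a unique boundary path x ∈ Λ^{≤∞} such that p ∧ d(x) = 0 and (x;(p, p+n)) ≈ (x_n;(p, p+n)) for all n ∈ ℕ^k. (This is the combinatorial content of the paper's Proposition that every infinite path y of the desourcification of Λ is of the form [π(y);(p_y,∞)] for a unique boundary path π(y) of Λ and a unique p_y ∈ ℕ^k with p_y ∧ d(π(y)) = 0.) -/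

import Mathlib

open scoped ENat

/-- `q ≤ m` coordinatewise, where `q ∈ ℕ^k` and `m ∈ (ℕ ∪ {∞})^k`. -/
def leDeg (k : ℕ) (q : Fin k → ℕ) (m : Fin k → ℕ∞) : Prop :=
  ∀ i, (q i : ℕ∞) ≤ m i

/-- The coordinatewise minimum `m ∧ d` of `m ∈ ℕ^k` and `d ∈ (ℕ ∪ {∞})^k`,
viewed as an element of `ℕ^k`. -/
noncomputable def wedge {k : ℕ} (m : Fin k → ℕ) (dx : Fin k → ℕ∞) : Fin k → ℕ :=
  fun i => ((m i : ℕ∞) ⊓ dx i).toNat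

lemma wedge_coe {k : ℕ} (m : Fin k → ℕ) (dx : Fin k → ℕ∞) (i : Fin k) :
    ((wedge m dx i : ℕ)  : ℕ∞) = (m i : ℕ∞) ⊓ dx i := by
  have h : (m i : ℕ∞) ⊓ dx i ≠ ⊤ :=
    (inf_le_left.trans_lt (ENat.coe_lt_top (m i))).ne
  simpa [wedge] using ENat.coe_toNat h

lemma wedge_leDeg {k : ℕ} (m : Fin k → ℕ) (dx : Fin k → ℕ∞) :
    leDeg k (wedge m dx) dx := by
  intro i
  rw [wedge_coe]
  exact inf_le_right

/-- The data of a countable-free small category with a degree map: the underlying data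
of a `k`-graph. -/
structure KGraphData (k : ℕ) where
  Obj : Type
  Mor : Type
  r : Mor → Obj
  s : Mor → Obj
  idm : Obj → Mor
  comp : Mor → Mor → Mor
  d : Mor → Fin k → ℕ

/-- The axioms making `Λ` a `k`-graph: a small category together with a degree functor
`d : Λ → ℕ^k` satisfying the factorisation property. (Composition `comp f g` is only
constrained when `s f = r g`.) -/
structure IsKGraph {k : ℕ} (Λ : KGraphData k) : Prop where
  r_id : ∀ v, Λ.r (Λ.idm v) = v
  s_id : ∀ v, Λ.s (Λ.idm v) = v
  id_comp : ∀ f, Λ.comp (Λ.idm (Λ.r f)) f = f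
  comp_id : ∀ f, Λ.comp f (Λ.idm (Λ.s f)) = f
  r_comp : ∀ f g, Λ.s f = Λ.r g → Λ.r (Λ.comp f g) = Λ.r f
  s_comp : ∀ f g, Λ.s f = Λ.r g → Λ.s (Λ.comp f g) = Λ.s g
  assoc : ∀ f g h, Λ.s f = Λ.r g → Λ.s g = Λ.r h →
    Λ.comp (Λ.comp f g) h = Λ.comp f (Λ.comp g h)
  d_id : ∀ v, Λ.d (Λ.idm v) = 0
  d_comp : ∀ f g, Λ.s f = Λ.r g → Λ.d (Λ.comp f g) = Λ.d f + Λ.d g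
  factor : ∀ (f : Λ.Mor) (m n : Fin k → ℕ), Λ.d f = m + n →
    ∃! p : Λ.Mor × Λ.Mor, Λ.s p.1 = Λ.r p.2 ∧ Λ.d p.1 = m ∧ Λ.d p.2 = n ∧
      Λ.comp p.1 p.2 = f

/-- `Λ` is row-finite: `vΛ^n` is finite for every vertex `v` and degree `n`. -/
def RowFinite {k : ℕ} (Λ : KGraphData k) : Prop :=
  ∀ (v : Λ.Obj) (n : Fin k → ℕ), {f : Λ.Mor | Λ.r f = v ∧ Λ.d f = n}.Finite

/-- `Λ` is locally convex. -/
def LocallyConvex {k : ℕ} (Λ : KGraphData k) : Prop :=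
  ∀ (i j : Fin k), i ≠ j → ∀ lam mu : Λ.Mor,
    Λ.d lam = Pi.single i 1 → Λ.d mu = Pi.single j 1 → Λ.r lam = Λ.r mu →
    (∃ f, Λ.r f = Λ.s lam ∧ Λ.d f = Pi.single j 1) ∧
    (∃ g, Λ.r g = Λ.s mu ∧ Λ.d g = Pi.single i 1)

/-- A boundary path of `Λ`: a degree-preserving functor `x : Ω_{k,m} → Λ`
(encoded by its vertex map `vert` and segment map `seg`, constrained on
pairs `p ≤ q ≤ m = deg`) such that whenever `p ≤ m` and `p i = m i`,
`x(p)Λ^{e_i} = ∅`. -/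
structure BPath (k : ℕ) (Λ : KGraphData k) where
  deg : Fin k → ℕ∞
  vert : (Fin k → ℕ) → Λ.Obj
  seg : (Fin k → ℕ) → (Fin k → ℕ) → Λ.Mor
  seg_r : ∀ p q, p ≤ q → leDeg k q deg → Λ.r (seg p q) = vert p
  seg_s : ∀ p q, p ≤ q → leDeg k q deg → Λ.s (seg p q) = vert q
  seg_deg : ∀ p q, p ≤ q → leDeg k q deg → Λ.d (seg p q) = q - p
  seg_id : ∀ p, leDeg k p deg → seg p p = Λ.idm (vert p)
  seg_comp : ∀ p q t, p ≤ q → q ≤ t → leDeg k t deg →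
    Λ.comp (seg p q) (seg q t) = seg p t
  boundary : ∀ (p : Fin k → ℕ) (i : Fin k), leDeg k p deg → (p i : ℕ∞) = deg i →
    ∀ e : Λ.Mor, Λ.r e = vert p → Λ.d e ≠ Pi.single i 1

/-- Equality of boundary paths as functors: same degree and the same segments on
the common (valid) domain. -/
def BPath.eqv {k : ℕ} {Λ : KGraphData k} (x y : BPath k Λ) : Prop :=
  x.deg = y.deg ∧ ∀ p q, p ≤ q → leDeg k q x.deg → x.seg p q = y.seg p q

lemma leDeg_add {k : ℕ} {n q : Fin k → ℕ} {D : Fin k → ℕ∞}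
    (hn : leDeg k n D) (hq : leDeg k q (fun i => D i - (n i : ℕ∞))) :
    leDeg k (q + n) D := by
  intro i
  have hqi := hq i
  have hni := hn i
  by_cases hD : D i = ⊤
  · rw [hD]; exact le_top
  · lift D i to ℕ using hD with a ha
    rw [show ((a : ℕ∞) - (n i : ℕ∞)) = ((a - n i : ℕ) : ℕ∞) by
      exact_mod_cast (ENat.coe_sub a (n i)).symm] at hqi
    have h1 : q i ≤ a - n i := by exact_mod_cast hqi
    have h2 : n i ≤ a := by exact_mod_cast hni
    have h3 : q i + n i ≤ a := by omega
    show ((q i + n i : ℕ) : ℕ∞) ≤ (a : ℕ∞)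
    exact_mod_cast h3

/-- The shift `σ^n(x)` of a boundary path `x` by `n ≤ d(x)`. -/
def BPath.shift {k : ℕ} {Λ : KGraphData k} (x : BPath k Λ) (n : Fin k → ℕ)
    (h : leDeg k n x.deg) : BPath k Λ where
  deg := fun i => x.deg i - (n i : ℕ∞)
  vert := fun p => x.vert (p + n)
  seg := fun p q => x.seg (p + n) (q + n)
  seg_r := fun p q hpq hq =>
    x.seg_r (p + n) (q + n) (add_le_add_left hpq n) (leDeg_add h hq)
  seg_s := fun p q hpq hq =>
    x.seg_s (p + n) (q + n) (add_le_add_left hpq n) (leDeg_add h hq)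
  seg_deg := by
    intro p q hpq hq
    rw [x.seg_deg (p + n) (q + n) (add_le_add_left hpq n) (leDeg_add h hq)]
    funext i
    simp only [Pi.sub_apply, Pi.add_apply]
    omega
  seg_id := by
    intro p hp
    show x.seg (p + n) (p + n) = _
    rw [x.seg_id (p + n) (leDeg_add h hp)]
  seg_comp := fun p q t hpq hqt ht =>
    x.seg_comp (p + n) (q + n) (t + n) (add_le_add_left hpq n)
      (add_le_add_left hqt n) (leDeg_add h ht)
  boundary := by
    intro p i hp hpi e he
    refine x.boundary (p + n) i (leDeg_add h hp) ?_ e he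
    have hni := h i
    have hpi' : (p i : ℕ∞) = x.deg i - (n i : ℕ∞) := hpi
    clear hpi
    by_cases hD : x.deg i = ⊤
    · rw [hD] at hpi'
      simp at hpi'
    · lift x.deg i to ℕ using hD with a ha
      rw [show ((a : ℕ∞) - (n i : ℕ∞)) = ((a - n i : ℕ) : ℕ∞) by
        exact_mod_cast (ENat.coe_sub a (n i)).symm] at hpi'
      have h1 : p i = a - n i := by exact_mod_cast hpi'
      have h2 : n i ≤ a := by exact_mod_cast hni
      have h3 : p i + n i = a := by omega
      show ((p i + n i : ℕ) : ℕ∞) = (a : ℕ∞)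
      exact_mod_cast h3

/-- The relation `∼` on `V_Λ = Λ^{≤∞} × ℕ^k`. -/
def VRel {k : ℕ} {Λ : KGraphData k} (a b : BPath k Λ × (Fin k → ℕ)) : Prop :=
  a.1.vert (wedge a.2 a.1.deg) = b.1.vert (wedge b.2 b.1.deg) ∧
  a.2 - wedge a.2 a.1.deg = b.2 - wedge b.2 b.1.deg

/-- The relation `≈` on `P_Λ = {(x;(m,n)) : x ∈ Λ^{≤∞}, m ≤ n}`
(as a relation on all triples). -/
def PRel {k : ℕ} {Λ : KGraphData k}
    (a b : BPath k Λ × (Fin k → ℕ) × (Fin k → ℕ)) : Prop :=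
  a.1.seg (wedge a.2.1 a.1.deg) (wedge a.2.2 a.1.deg) =
    b.1.seg (wedge b.2.1 b.1.deg) (wedge b.2.2 b.1.deg) ∧
  a.2.1 - wedge a.2.1 a.1.deg = b.2.1 - wedge b.2.1 b.1.deg ∧
  a.2.2 - a.2.1 = b.2.2 - b.2.1

/-- `z` is the concatenation `λ x` of the morphism `lam` with the boundary path `x`:
`z` has degree `d(lam) + d(x)`, `z(0, d lam) = lam`, and
`z(d lam, d lam + p) = x(0, p)` for all `p ≤ d(x)`. -/
def IsConcat {k : ℕ} (Λ : KGraphData k) (lam : Λ.Mor) (x z : BPath k Λ) : Prop :=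
  z.deg = (fun i => (Λ.d lam i : ℕ∞) + x.deg i) ∧
  z.seg 0 (Λ.d lam) = lam ∧
  ∀ p, leDeg k p x.deg → z.seg (Λ.d lam) (Λ.d lam + p) = x.seg 0 p

/-- `Λ` has local periodicity `m, n` at the vertex `v`: for every boundary path
`x ∈ vΛ^{≤∞}`, `m − m∧d(x) = n − n∧d(x)` and `σ^{m∧d(x)}(x) = σ^{n∧d(x)}(x)`. -/
def LocalPeriodicity {k : ℕ} (Λ : KGraphData k) (m n : Fin k → ℕ) (v : Λ.Obj) : Prop :=
  ∀ x : BPath k Λ, x.vert 0 = v →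
    (m - wedge m x.deg = n - wedge n x.deg) ∧
    BPath.eqv (x.shift (wedge m x.deg) (wedge_leDeg m x.deg))
      (x.shift (wedge n x.deg) (wedge_leDeg n x.deg))

section Aux

variable {k : ℕ} {Λ : KGraphData k}

lemma leDeg_of_le {q q' : Fin k → ℕ} {D : Fin k → ℕ∞} (h : q ≤ q')
    (h' : leDeg k q' D) : leDeg k q D := fun i =>
  le_trans (by exact_mod_cast h i) (h' i)

lemma wedge_le (m : Fin k → ℕ) (d : Fin k → ℕ∞) : wedge m d ≤ m := fun i => by
  have h : ((wedge m d i : ℕ) : ℕ∞) ≤ (m i : ℕ∞) := by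
    rw [wedge_coe]; exact inf_le_left
  exact_mod_cast h

lemma wedge_mono_left {m m' : Fin k → ℕ} (d : Fin k → ℕ∞) (h : m ≤ m') :
    wedge m d ≤ wedge m' d := fun i => by
  have h2 : ((wedge m d i : ℕ) : ℕ∞) ≤ ((wedge m' d i : ℕ) : ℕ∞) := by
    rw [wedge_coe, wedge_coe]
    exact inf_le_inf (by exact_mod_cast h i) le_rfl
  exact_mod_cast h2

lemma zero_le_pi (q : Fin k → ℕ) : (0 : Fin k → ℕ) ≤ q := fun i => Nat.zero_le _

lemma pi_sub_zero (q : Fin k → ℕ) : q - 0 = q := by funext i; simp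

/-- Splitting a common segment: if two boundary paths share the segment from `a` to `t`,
they share the two halves. -/
lemma seg_split (hΛ : IsKGraph Λ) (x y : BPath k Λ) {a m t : Fin k → ℕ}
    (ham : a ≤ m) (hmt : m ≤ t) (hx : leDeg k t x.deg) (hy : leDeg k t y.deg)
    (h : x.seg a t = y.seg a t) :
    x.seg a m = y.seg a m ∧ x.seg m t = y.seg m t := by
  have hat : a ≤ t := ham.trans hmt
  have hd : Λ.d (x.seg a t) = (m - a) + (t - m) := by
    rw [x.seg_deg a t hat hx]
    funext i
    have h1 : a i ≤ m i := ham i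
    have h2 : m i ≤ t i := hmt i
    simp only [Pi.sub_apply, Pi.add_apply]
    omega
  obtain ⟨P, hP, hPuniq⟩ := hΛ.factor (x.seg a t) (m - a) (t - m) hd
  have hxP : ((x.seg a m, x.seg m t) : Λ.Mor × Λ.Mor) = P := by
    refine hPuniq _ ⟨?_, ?_, ?_, ?_⟩
    · rw [x.seg_s a m ham (leDeg_of_le hmt hx), x.seg_r m t hmt hx]
    · exact x.seg_deg a m ham (leDeg_of_le hmt hx)
    · exact x.seg_deg m t hmt hx
    · exact x.seg_comp a m t ham hmt hx
  have hyP : ((y.seg a m, y.seg m t) : Λ.Mor × Λ.Mor) = P := by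
    refine hPuniq _ ⟨?_, ?_, ?_, ?_⟩
    · rw [y.seg_s a m ham (leDeg_of_le hmt hy), y.seg_r m t hmt hy]
    · exact y.seg_deg a m ham (leDeg_of_le hmt hy)
    · exact y.seg_deg m t hmt hy
    · rw [y.seg_comp a m t ham hmt hy, ← h]
  have := hxP.trans hyP.symm
  exact ⟨congrArg Prod.fst this, congrArg Prod.snd this⟩

/-- If two boundary paths share the segment from `a` to `t`, they share every
subsegment. -/
lemma seg_sub (hΛ : IsKGraph Λ) (x y : BPath k Λ) {a p' q' t : Fin k → ℕ}
    (h1 : a ≤ p') (h2 : p' ≤ q') (h3 : q' ≤ t)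
    (hx : leDeg k t x.deg) (hy : leDeg k t y.deg)
    (h : x.seg a t = y.seg a t) :
    x.seg p' q' = y.seg p' q' := by
  have step1 := (seg_split hΛ x y h1 (h2.trans h3) hx hy h).2
  exact (seg_split hΛ x y h2 h3 hx hy step1).1

end Aux
section Limit

variable {k : ℕ} {Λ : KGraphData k}

/-- `fw p X n = (p+n) ∧ d(X n)`. -/
noncomputable def fw (p : Fin k → ℕ) (X : (Fin k → ℕ) → BPath k Λ) (n : Fin k → ℕ) : Fin k → ℕ :=
  wedge (p + n) (X n).deg

/-- The degree of the limit path. -/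
noncomputable def Dlim (p : Fin k → ℕ) (X : (Fin k → ℕ) → BPath k Λ) : Fin k → ℕ∞ :=
  fun i => ⨆ N : ℕ, ((fw p X (fun _ => N) i : ℕ∞))

lemma M_le_D (p : Fin k → ℕ) (X : (Fin k → ℕ) → BPath k Λ) (N : ℕ) (i : Fin k) :
    ((fw p X (fun _ => N) i : ℕ∞)) ≤ Dlim p X i :=
  le_iSup (fun N => ((fw p X (fun _ => N) i : ℕ∞))) N

lemma leDeg_M (p : Fin k → ℕ) (X : (Fin k → ℕ) → BPath k Λ) (N : ℕ) :
    leDeg k (fw p X (fun _ => N)) (X (fun _ => N)).deg :=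
  wedge_leDeg _ _

variable {p : Fin k → ℕ} {X : (Fin k → ℕ) → BPath k Λ}
variable (hΛ : IsKGraph Λ) (h0 : ∀ n, wedge p (X n).deg = 0)
variable (hcoh : ∀ a b : Fin k → ℕ, a ≤ b → PRel (X a, p, p + a) (X b, p, p + a))
include hΛ h0 hcoh

lemma hfw {a b : Fin k → ℕ} (hab : a ≤ b) :
    wedge (p + a) (X b).deg = fw p X a := by
  have h := (hcoh a b hab).1
  rw [h0 a, h0 b] at h
  have hd := congrArg Λ.d h
  rw [(X a).seg_deg 0 _ (zero_le_pi _) (wedge_leDeg _ _),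
    (X b).seg_deg 0 _ (zero_le_pi _) (wedge_leDeg _ _),
    pi_sub_zero, pi_sub_zero] at hd
  exact hd.symm

lemma coh' {a b : Fin k → ℕ} (hab : a ≤ b) :
    (X a).seg 0 (fw p X a) = (X b).seg 0 (fw p X a) := by
  have h := (hcoh a b hab).1
  rw [h0 a, h0 b, hfw hΛ h0 hcoh hab] at h
  exact h

lemma fw_mono {a b : Fin k → ℕ} (hab : a ≤ b) : fw p X a ≤ fw p X b := by
  calc fw p X a = wedge (p + a) (X b).deg := (hfw hΛ h0 hcoh hab).symm
    _ ≤ wedge (p + b) (X b).deg := wedge_mono_left _ (add_le_add_right hab p)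

lemma exists_N {q : Fin k → ℕ} (hq : leDeg k q (Dlim p X)) :
    ∃ N : ℕ, q ≤ fw p X (fun _ => N) := by
  have hex : ∀ i, ∃ N : ℕ, q i ≤ fw p X (fun _ => N) i := by
    intro i
    by_contra hc
    push_neg at hc
    have hq1 : 1 ≤ q i := (hc 0).trans_le (Nat.le_refl _) |>.le.trans (le_refl _) |> fun _ => Nat.one_le_iff_ne_zero.mpr (by have := hc 0; omega)
    have hsup : Dlim p X i ≤ ((q i - 1 : ℕ) : ℕ∞) := by
      refine iSup_le fun N => ?_
      have := hc N
      exact_mod_cast (by omega : fw p X (fun _ => N) i ≤ q i - 1)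
    have h2 : (q i : ℕ∞) ≤ ((q i - 1 : ℕ) : ℕ∞) := (hq i).trans hsup
    have h3 : q i ≤ q i - 1 := by exact_mod_cast h2
    omega
  choose Nf hNf using hex
  refine ⟨Finset.univ.sup Nf, fun i => (hNf i).trans ?_⟩
  have hle : (fun _ => Nf i : Fin k → ℕ) ≤ (fun _ => Finset.univ.sup Nf) :=
    fun j => Finset.le_sup (Finset.mem_univ i)
  exact fw_mono hΛ h0 hcoh hle i

lemma agree_seg {N N' : ℕ} {p'' q'' : Fin k → ℕ} (hpq : p'' ≤ q'')
    (h1 : q'' ≤ fw p X (fun _ => N)) (h2 : q'' ≤ fw p X (fun _ => N')) :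
    (X (fun _ => N)).seg p'' q'' = (X (fun _ => N')).seg p'' q'' := by
  have key : ∀ N N' : ℕ, N ≤ N' → ∀ p'' q'' : Fin k → ℕ, p'' ≤ q'' →
      q'' ≤ fw p X (fun _ => N) →
      (X (fun _ => N)).seg p'' q'' = (X (fun _ => N')).seg p'' q'' := by
    intro N N' hNN' p'' q'' hpq hq
    have hconst : (fun _ => N : Fin k → ℕ) ≤ (fun _ => N') := fun _ => hNN'
    have hseg := coh' hΛ h0 hcoh hconst
    refine seg_sub hΛ (X (fun _ => N)) (X (fun _ => N')) (zero_le_pi _) hpq hq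
      (leDeg_M p X N) ?_ hseg
    rw [← hfw hΛ h0 hcoh hconst]
    exact wedge_leDeg _ _
  have t1 := key N (max N N') (le_max_left _ _) p'' q'' hpq h1
  have t2 := key N' (max N N') (le_max_right _ _) p'' q'' hpq h2
  rw [t1, t2]

lemma agree_vert {N N' : ℕ} {q'' : Fin k → ℕ}
    (h1 : q'' ≤ fw p X (fun _ => N)) (h2 : q'' ≤ fw p X (fun _ => N')) :
    (X (fun _ => N)).vert q'' = (X (fun _ => N')).vert q'' := by
  rw [← (X (fun _ => N)).seg_s 0 q'' (zero_le_pi _) (leDeg_of_le h1 (leDeg_M p X N)),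
    ← (X (fun _ => N')).seg_s 0 q'' (zero_le_pi _) (leDeg_of_le h2 (leDeg_M p X N')),
    agree_seg hΛ h0 hcoh (zero_le_pi _) h1 h2]

lemma stab {n : Fin k → ℕ} {i : Fin k} (hlt : fw p X n i < (p + n) i)
    {m : Fin k → ℕ} (hnm : n ≤ m) : fw p X m i = fw p X n i := by
  have h1 : wedge (p + n) (X m).deg = fw p X n := hfw hΛ h0 hcoh hnm
  have h2 : ((p + n) i : ℕ∞) ⊓ (X m).deg i = (fw p X n i : ℕ∞) := by
    rw [← wedge_coe]
    exact_mod_cast congrFun h1 i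
  have hdm : (X m).deg i = (fw p X n i : ℕ∞) := by
    rcases le_total ((p + n) i : ℕ∞) ((X m).deg i) with h | h
    · rw [inf_eq_left.mpr h] at h2
      have heq : (p + n) i = fw p X n i := by exact_mod_cast h2
      exact absurd heq hlt.ne'
    · rw [inf_eq_right.mpr h] at h2
      exact h2
  have h3 : ((fw p X m i : ℕ) : ℕ∞) = ((p + m) i : ℕ∞) ⊓ (X m).deg i :=
    wedge_coe (p + m) (X m).deg i
  have hle : (fw p X n i : ℕ∞) ≤ ((p + m) i : ℕ∞) := by
    have hnm' : (p + n) i ≤ (p + m) i := by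
      have h6 : n i ≤ m i := hnm i
      show p i + n i ≤ p i + m i
      omega
    exact_mod_cast le_trans (le_of_lt hlt) hnm'
  rw [hdm, inf_eq_right.mpr hle] at h3
  exact_mod_cast h3

lemma wedge_pn_D (n : Fin k → ℕ) : wedge (p + n) (Dlim p X) = fw p X n := by
  funext i
  have hle1 : fw p X n i ≤ wedge (p + n) (Dlim p X) i := by
    have c1 : (fw p X n i : ℕ∞) ≤ ((p + n) i : ℕ∞) := by
      exact_mod_cast wedge_le (p + n) (X n).deg i
    have c2 : (fw p X n i : ℕ∞) ≤ Dlim p X i := by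
      have hnc : n ≤ (fun _ => Finset.univ.sup n : Fin k → ℕ) :=
        fun j => Finset.le_sup (Finset.mem_univ j)
      have hm := fw_mono hΛ h0 hcoh hnc
      exact le_trans (by exact_mod_cast hm i) (M_le_D p X _ i)
    have h4 : (fw p X n i : ℕ∞) ≤ ((p + n) i : ℕ∞) ⊓ Dlim p X i := le_inf c1 c2
    rw [← wedge_coe] at h4
    exact_mod_cast h4
  have hle2 : wedge (p + n) (Dlim p X) i ≤ fw p X n i := by
    rcases eq_or_lt_of_le (wedge_le (p + n) (X n).deg i) with heq | hlt
    · exact le_of_le_of_eq (wedge_le (p + n) (Dlim p X) i) heq.symm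
    · have hD : Dlim p X i ≤ (fw p X n i : ℕ∞) := by
        refine iSup_le fun N => ?_
        have hm1 : (fun _ => N : Fin k → ℕ) ≤ n ⊔ (fun _ => N) := le_sup_right
        have hm2 : n ≤ n ⊔ (fun _ => N) := le_sup_left
        have e1 : fw p X (n ⊔ fun _ => N) i = fw p X n i := stab hΛ h0 hcoh hlt hm2
        have hm := fw_mono hΛ h0 hcoh hm1
        exact_mod_cast (hm i).trans_eq e1
      have h5 : ((wedge (p + n) (Dlim p X) i : ℕ) : ℕ∞) ≤ (fw p X n i : ℕ∞) := by
        rw [wedge_coe]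
        exact inf_le_right.trans hD
      exact_mod_cast h5
  exact le_antisymm hle2 hle1

lemma wedge_p_D : wedge p (Dlim p X) = 0 := by
  funext i
  show ((p i : ℕ∞) ⊓ Dlim p X i).toNat = 0
  rcases Nat.eq_zero_or_pos (p i) with h | h
  · simp [h]
  · have hdeg : ∀ N : ℕ, (X (fun _ => N : Fin k → ℕ)).deg i = 0 := by
      intro N
      have h0' := congrFun (h0 (fun _ => N)) i
      have hinf : (p i : ℕ∞) ⊓ (X (fun _ => N : Fin k → ℕ)).deg i = 0 := by
        rw [← wedge_coe]
        exact_mod_cast h0'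
      rcases le_total (p i : ℕ∞) ((X (fun _ => N : Fin k → ℕ)).deg i) with hh | hh
      · rw [inf_eq_left.mpr hh] at hinf
        have : p i = 0 := by exact_mod_cast hinf
        omega
      · rw [inf_eq_right.mpr hh] at hinf
        exact hinf
    have hDi : Dlim p X i = 0 := by
      refine le_antisymm (iSup_le fun N => ?_) zero_le
      have hc := wedge_coe (p + (fun _ => N : Fin k → ℕ)) (X (fun _ => N : Fin k → ℕ)).deg i
      rw [hdeg N, inf_eq_right.mpr zero_le] at hc
      exact le_of_eq hc
    rw [hDi]
    simp

lemma exists_xlim : ∃ x : BPath k Λ, x.deg = Dlim p X ∧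
    ∀ (p' q' : Fin k → ℕ) (N : ℕ), p' ≤ q' → q' ≤ fw p X (fun _ => N) →
      x.seg p' q' = (X (fun _ => N : Fin k → ℕ)).seg p' q' := by
  classical
  have hch : ∀ q : Fin k → ℕ, ∃ N : ℕ,
      (∃ N', q ≤ fw p X (fun _ => N')) → q ≤ fw p X (fun _ => N) := by
    intro q
    by_cases h : ∃ N', q ≤ fw p X (fun _ => N')
    · obtain ⟨N, hN⟩ := h
      exact ⟨N, fun _ => hN⟩
    · exact ⟨0, fun hc => absurd hc h⟩
  choose Nof hNof using hch
  have hMle : ∀ q : Fin k → ℕ, leDeg k q (Dlim p X) → q ≤ fw p X (fun _ => Nof q) :=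
    fun q hq => hNof q (exists_N hΛ h0 hcoh hq)
  have hXdeg : ∀ (N : ℕ) (q : Fin k → ℕ), q ≤ fw p X (fun _ => N) →
      leDeg k q (X (fun _ => N : Fin k → ℕ)).deg :=
    fun N q h => leDeg_of_le h (wedge_leDeg _ _)
  refine ⟨⟨Dlim p X, fun q => (X (fun _ => Nof q : Fin k → ℕ)).vert q,
    fun p' q' => (X (fun _ => Nof q' : Fin k → ℕ)).seg p' q',
    ?_, ?_, ?_, ?_, ?_, ?_⟩, rfl, ?_⟩
  · -- seg_r
    intro p' q' hpq hq
    have hq' := hMle q' hq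
    have hp' := hMle p' (leDeg_of_le hpq hq)
    rw [(X _).seg_r p' q' hpq (hXdeg _ _ hq')]
    exact agree_vert hΛ h0 hcoh (hpq.trans hq') hp'
  · -- seg_s
    intro p' q' hpq hq
    exact (X _).seg_s p' q' hpq (hXdeg _ _ (hMle q' hq))
  · -- seg_deg
    intro p' q' hpq hq
    exact (X _).seg_deg p' q' hpq (hXdeg _ _ (hMle q' hq))
  · -- seg_id
    intro q hq
    exact (X _).seg_id q (hXdeg _ _ (hMle q hq))
  · -- seg_comp
    intro p' q' t' hpq hqt ht
    have ht' := hMle t' ht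
    have hq' := hMle q' (leDeg_of_le hqt ht)
    show Λ.comp ((X (fun _ => Nof q' : Fin k → ℕ)).seg p' q')
        ((X (fun _ => Nof t' : Fin k → ℕ)).seg q' t')
      = (X (fun _ => Nof t' : Fin k → ℕ)).seg p' t'
    rw [agree_seg hΛ h0 hcoh hpq hq' (hqt.trans ht')]
    exact (X _).seg_comp p' q' t' hpq hqt (hXdeg _ _ ht')
  · -- boundary
    intro q i hq hqi e he
    have hq1 := hMle q hq
    have hconst : (fun _ => Nof q : Fin k → ℕ) ≤ (fun _ => max (Nof q) (q i + 1)) :=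
      fun _ => le_max_left _ _
    have hq2 : q ≤ fw p X (fun _ => max (Nof q) (q i + 1)) :=
      hq1.trans (fw_mono hΛ h0 hcoh hconst)
    set N₂ := max (Nof q) (q i + 1) with hN₂def
    have hub : ((fw p X (fun _ => N₂)) i : ℕ∞) ≤ (q i : ℕ∞) :=
      (M_le_D p X N₂ i).trans (le_of_eq hqi.symm)
    have heq : fw p X (fun _ => N₂) i = q i :=
      le_antisymm (by exact_mod_cast hub) (hq2 i)
    have hcoe : ((p + (fun _ => N₂ : Fin k → ℕ)) i : ℕ∞) ⊓ (X (fun _ => N₂ : Fin k → ℕ)).deg i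
        = (q i : ℕ∞) := by
      rw [← wedge_coe]
      exact_mod_cast heq
    have hlt : (q i : ℕ∞) < ((p + (fun _ => N₂ : Fin k → ℕ)) i : ℕ∞) := by
      have hn : q i < (p + (fun _ => N₂ : Fin k → ℕ)) i := by
        show q i < p i + N₂
        have := le_max_right (Nof q) (q i + 1)
        omega
      exact_mod_cast hn
    have hdeg : (q i : ℕ∞) = (X (fun _ => N₂ : Fin k → ℕ)).deg i := by
      rcases le_total ((p + (fun _ => N₂ : Fin k → ℕ)) i : ℕ∞)
          ((X (fun _ => N₂ : Fin k → ℕ)).deg i) with hh | hh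
      · rw [inf_eq_left.mpr hh] at hcoe
        exact absurd hcoe hlt.ne'
      · rw [inf_eq_right.mpr hh] at hcoe
        exact hcoe.symm
    exact (X (fun _ => N₂ : Fin k → ℕ)).boundary q i (hXdeg _ _ hq2) hdeg e
      (he.trans (agree_vert hΛ h0 hcoh hq1 hq2))
  · -- characterisation
    intro p' q' N hpq hq
    exact agree_seg hΛ h0 hcoh hpq (hNof q' ⟨N, hq⟩) hq

end Limit
/-- Given `p ∈ ℕ^k` and a coherent family `(x_n)_{n ∈ ℕ^k}` of
boundary paths with `p ∧ d(x_n) = 0` and `(x_a;(p,p+a)) ≈ (x_b;(p,p+a))` for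
`a ≤ b`, there is a unique boundary path `x` with `p ∧ d(x) = 0` and
`(x;(p,p+n)) ≈ (x_n;(p,p+n))` for all `n`. -/
theorem exists_unique_limit_boundary_path (k : ℕ) (hk : 1 ≤ k) (Λ : KGraphData k)
    (hΛ : IsKGraph Λ) (hrf : RowFinite Λ) (hlc : LocallyConvex Λ)
    (p : Fin k → ℕ) (X : (Fin k → ℕ) → BPath k Λ)
    (h0 : ∀ n, wedge p (X n).deg = 0)
    (hcoh : ∀ a b : Fin k → ℕ, a ≤ b → PRel (X a, p, p + a) (X b, p, p + a)) :
    ∃ x : BPath k Λ,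
      (wedge p x.deg = 0 ∧ ∀ n, PRel (x, p, p + n) (X n, p, p + n)) ∧
      ∀ x' : BPath k Λ,
        (wedge p x'.deg = 0 ∧ ∀ n, PRel (x', p, p + n) (X n, p, p + n)) →
        BPath.eqv x' x := by
  obtain ⟨x, hxdeg, hxchar⟩ := exists_xlim hΛ h0 hcoh
  have hx0 : wedge p x.deg = 0 := by
    rw [hxdeg]; exact wedge_p_D hΛ h0 hcoh
  refine ⟨x, ⟨hx0, ?_⟩, ?_⟩
  · -- PRel for each n
    intro n
    refine ⟨?_, ?_, rfl⟩
    · show x.seg (wedge p x.deg) (wedge (p + n) x.deg)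
        = (X n).seg (wedge p (X n).deg) (wedge (p + n) (X n).deg)
      rw [hx0, h0 n, hxdeg, wedge_pn_D hΛ h0 hcoh n]
      have hnN : n ≤ (fun _ => Finset.univ.sup n : Fin k → ℕ) :=
        fun j => Finset.le_sup (Finset.mem_univ j)
      have h1 : fw p X n ≤ fw p X (fun _ => Finset.univ.sup n) :=
        fw_mono hΛ h0 hcoh hnN
      rw [hxchar 0 (fw p X n) (Finset.univ.sup n) (zero_le_pi _) h1]
      exact (coh' hΛ h0 hcoh hnN).symm
    · show p - wedge p x.deg = p - wedge p (X n).deg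
      rw [hx0, h0 n]
  · -- uniqueness
    rintro x' ⟨hx'0, hx'⟩
    have hw : ∀ n, wedge (p + n) x'.deg = fw p X n := by
      intro n
      have h := (hx' n).1
      rw [hx'0, h0 n] at h
      have hd := congrArg Λ.d h
      rw [x'.seg_deg 0 _ (zero_le_pi _) (wedge_leDeg _ _),
        (X n).seg_deg 0 _ (zero_le_pi _) (wedge_leDeg _ _),
        pi_sub_zero, pi_sub_zero] at hd
      exact hd
    have hdeq : x'.deg = Dlim p X := by
      funext i
      have hwi : ∀ N : ℕ, ((p + (fun _ => N : Fin k → ℕ)) i : ℕ∞) ⊓ x'.deg i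
          = (fw p X (fun _ => N) i : ℕ∞) := by
        intro N
        rw [← wedge_coe]
        exact_mod_cast congrFun (hw (fun _ => N)) i
      rcases eq_or_ne (x'.deg i) ⊤ with htop | hfin
      · rw [htop]
        symm
        by_contra h'
        lift Dlim p X i to ℕ using h' with c hc
        have hcN : ∀ N : ℕ, ((p + (fun _ => N : Fin k → ℕ)) i : ℕ∞) ≤ (c : ℕ∞) := by
          intro N
          have := hwi N
          rw [htop, inf_top_eq] at this
          rw [this]
          exact_mod_cast (M_le_D p X N i).trans_eq hc.symm
        have := hcN (c + 1)
        have h2 : p i + (c + 1) ≤ c := by exact_mod_cast this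
        omega
      · lift x'.deg i to ℕ using hfin with c hc
        refine le_antisymm ?_ (iSup_le fun N => ?_)
        · have h3 := hwi c
          have hmin : ((p + (fun _ => c : Fin k → ℕ)) i : ℕ∞) ⊓ (c : ℕ∞) = (c : ℕ∞) := by
            refine inf_eq_right.mpr ?_
            exact_mod_cast (by show c ≤ p i + c; omega : c ≤ (p + (fun _ => c : Fin k → ℕ)) i)
          rw [hmin] at h3
          rw [h3]
          exact M_le_D p X c i
        · rw [← hwi N]
          exact inf_le_right
    refine ⟨hdeq.trans hxdeg.symm, ?_⟩
    intro p' q' hpq hq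
    rw [hdeq] at hq
    obtain ⟨N, hN⟩ := exists_N hΛ h0 hcoh hq
    have hx'seg : x'.seg 0 (fw p X (fun _ => N))
        = (X (fun _ => N : Fin k → ℕ)).seg 0 (fw p X (fun _ => N)) := by
      have h := (hx' (fun _ => N)).1
      rw [hx'0, h0 _, hw (fun _ => N)] at h
      exact h
    have hxseg : x.seg 0 (fw p X (fun _ => N))
        = (X (fun _ => N : Fin k → ℕ)).seg 0 (fw p X (fun _ => N)) :=
      hxchar 0 _ N (zero_le_pi _) le_rfl
    refine seg_sub hΛ x' x (zero_le_pi p') hpq hN ?_ ?_ (hx'seg.trans hxseg.symm)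
    · rw [hdeq]
      exact fun i => M_le_D p X N i
    · rw [hxdeg]
      exact fun i => M_le_D p X N i
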